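/- Let Σd ∈ S⁺⁺ₙ and suppose ζ ∈ ℝ^{n×p} satisfies ζζᵀ ≻ 0. Then the gradient of g(ζ) := tr((Σd^{1/2} ζ ζᵀ Σd^{1/2})^{1/2}) with respect to ζ exists and equals Σd^{1/2} (Σd^{1/2} ζ ζᵀ Σd^{1/2})^{−1/2} Σd^{1/2} ζ. -/

import Mathlib

open Matrix Classical

noncomputable def psqrt {n : ℕ} (A : Matrix (Fin n) (Fin n) ℝ) : Matrix (Fin n) (Fin n) ℝ :=
  if h : A.PosSemidef then
    (h.1.eigenvectorUnitary : Matrix (Fin n) (Fin n) ℝ) * diagonal ((↑) ∘ (√·) ∘ h.1.eigenvalues)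
      * (star h.1.eigenvectorUnitary : Matrix (Fin n) (Fin n) ℝ) else 0

attribute [local instance] Matrix.frobeniusNormedAddCommGroup Matrix.frobeniusNormedSpace

open Topology Filter
open scoped MatrixOrder

section Helpers

lemma psqrt_eq {n : ℕ} {A : Matrix (Fin n) (Fin n) ℝ} (hA : A.PosSemidef) :
    psqrt A = CFC.sqrt A := by
  unfold psqrt; rw [dif_pos hA, CFC.sqrt_eq_cfc, cfc_nnreal_eq_real _ A, hA.1.cfc_eq]
  simp only [IsHermitian.cfc, Unitary.conjStarAlgAut_apply]
  congr 3; funext i; simp [hA.eigenvalues_nonneg i]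

lemma psqrt_posSemidef {n : ℕ} {A : Matrix (Fin n) (Fin n) ℝ} (hA : A.PosSemidef) :
    (psqrt A).PosSemidef := by rw [psqrt_eq hA]; exact Matrix.nonneg_iff_posSemidef.1 (CFC.sqrt_nonneg A)

lemma psqrt_mul_self {n : ℕ} {A : Matrix (Fin n) (Fin n) ℝ} (hA : A.PosSemidef) :
    psqrt A * psqrt A = A := by rw [psqrt_eq hA]; exact CFC.sqrt_mul_sqrt_self A hA.nonneg

lemma herm_transpose {n : ℕ} {A : Matrix (Fin n) (Fin n) ℝ} (h : A.IsHermitian) : Aᵀ = A := by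
  have h2 := h.eq
  rwa [Matrix.conjTranspose_eq_transpose_of_trivial] at h2

lemma posDef_of_det_ne_zero' {n : ℕ} {A : Matrix (Fin n) (Fin n) ℝ} (hA : A.PosSemidef)
    (h : A.det ≠ 0) : A.PosDef := by
  refine posDef_iff_dotProduct_mulVec.2 ⟨hA.1, fun x hx => ?_⟩
  rcases lt_or_eq_of_le (hA.dotProduct_mulVec_nonneg x) with h1 | h1
  · exact h1
  · exfalso
    have h2 : A *ᵥ x = 0 := (hA.dotProduct_mulVec_zero_iff x).1 h1.symm
    have h3 : x = 0 := by
      have h4 : A⁻¹ *ᵥ (A *ᵥ x) = x := by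
        rw [Matrix.mulVec_mulVec, Matrix.nonsing_inv_mul A (Ne.isUnit h)]
        simp
      rw [h2] at h4; simpa using h4.symm
    exact hx h3

lemma psqrt_posDef {n : ℕ} {A : Matrix (Fin n) (Fin n) ℝ} (hA : A.PosDef) :
    (psqrt A).PosDef := by
  refine posDef_of_det_ne_zero' (psqrt_posSemidef hA.posSemidef) (fun h => ?_)
  have h2 : (psqrt A).det * (psqrt A).det = A.det := by
    rw [← Matrix.det_mul, psqrt_mul_self hA.posSemidef]
  rw [h, mul_zero] at h2
  exact hA.det_pos.ne' h2.symm

lemma trace_transpose_mul_self_nonneg {a b : ℕ} (A : Matrix (Fin a) (Fin b) ℝ) :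
    0 ≤ (Aᵀ * A).trace := by
  simp only [Matrix.trace, Matrix.diag, Matrix.mul_apply, Matrix.transpose_apply]
  exact Finset.sum_nonneg fun j _ => Finset.sum_nonneg fun i _ => mul_self_nonneg _

lemma eq_zero_of_trace_transpose_mul_self {a b : ℕ} {A : Matrix (Fin a) (Fin b) ℝ}
    (h : (Aᵀ * A).trace = 0) : A = 0 := by
  simp only [Matrix.trace, Matrix.diag, Matrix.mul_apply, Matrix.transpose_apply] at h
  rw [Finset.sum_eq_zero_iff_of_nonneg
    (fun j _ => Finset.sum_nonneg fun i _ => mul_self_nonneg (A i j))] at h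
  ext i j
  have h2 := h j (Finset.mem_univ j)
  rw [Finset.sum_eq_zero_iff_of_nonneg (fun i _ => mul_self_nonneg (A i j))] at h2
  have := h2 i (Finset.mem_univ i)
  simpa [mul_self_eq_zero] using this

lemma psd_trace_nonneg {n : ℕ} {A : Matrix (Fin n) (Fin n) ℝ} (hA : A.PosSemidef) :
    0 ≤ A.trace := by
  obtain ⟨B, rfl⟩ : ∃ B : Matrix (Fin n) (Fin n) ℝ, A = Bᴴ * B :=
    CStarAlgebra.nonneg_iff_eq_star_mul_self.mp hA.nonneg
  rw [Matrix.conjTranspose_eq_transpose_of_trivial]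
  exact trace_transpose_mul_self_nonneg B

lemma psd_eq_zero_of_trace {n : ℕ} {A : Matrix (Fin n) (Fin n) ℝ} (hA : A.PosSemidef)
    (h : A.trace = 0) : A = 0 := by
  obtain ⟨B, rfl⟩ : ∃ B : Matrix (Fin n) (Fin n) ℝ, A = Bᴴ * B :=
    CStarAlgebra.nonneg_iff_eq_star_mul_self.mp hA.nonneg
  rw [Matrix.conjTranspose_eq_transpose_of_trivial] at h ⊢
  rw [eq_zero_of_trace_transpose_mul_self h]
  simp

lemma trace_psd_mul_nonneg {n : ℕ} {P Q : Matrix (Fin n) (Fin n) ℝ} (hP : P.PosSemidef)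
    (hQ : Q.PosSemidef) : 0 ≤ (P * Q).trace := by
  have hC : psqrt Q * psqrt Q = Q := psqrt_mul_self hQ
  have hCps := psqrt_posSemidef hQ
  have hCher : (psqrt Q)ᴴ = psqrt Q := hCps.1
  have h1 : P * Q = (P * psqrt Q) * psqrt Q := by rw [Matrix.mul_assoc, hC]
  rw [h1, Matrix.trace_mul_comm]
  have h2 : ((psqrt Q)ᴴ * P * psqrt Q).PosSemidef := hP.conjTranspose_mul_mul_same (psqrt Q)
  rw [hCher] at h2
  have h3 : psqrt Q * (P * psqrt Q) = psqrt Q * P * psqrt Q := by rw [Matrix.mul_assoc]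
  rw [h3]
  exact psd_trace_nonneg h2

lemma sylvester_inj {n : ℕ} {Y : Matrix (Fin n) (Fin n) ℝ} (hY : Y.PosDef)
    {K : Matrix (Fin n) (Fin n) ℝ} (h : Y * K + K * Y = 0) : K = 0 := by
  have hYt : Kᵀ * (Y * K) + Kᵀ * (K * Y) = 0 := by rw [← Matrix.mul_add, h, Matrix.mul_zero]
  have ht : (Kᵀ * (Y * K)).trace + (Kᵀ * (K * Y)).trace = 0 := by
    rw [← Matrix.trace_add, hYt, Matrix.trace_zero]
  have h1 : (Kᵀ * Y * K).PosSemidef := by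
    have := hY.posSemidef.conjTranspose_mul_mul_same K
    rwa [Matrix.conjTranspose_eq_transpose_of_trivial] at this
  have h1' : (Kᵀ * (Y * K)).trace = (Kᵀ * Y * K).trace := by rw [Matrix.mul_assoc]
  have h2 : 0 ≤ (Kᵀ * (K * Y)).trace := by
    have h2a : Kᵀ * (K * Y) = (Kᵀ * K) * Y := by rw [Matrix.mul_assoc]
    rw [h2a]
    have hKK : (Kᵀ * K).PosSemidef := by
      have := Matrix.posSemidef_conjTranspose_mul_self K
      rwa [Matrix.conjTranspose_eq_transpose_of_trivial] at this
    exact trace_psd_mul_nonneg hKK hY.posSemidef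
  have h3 : 0 ≤ (Kᵀ * Y * K).trace := psd_trace_nonneg h1
  have h4 : (Kᵀ * Y * K).trace = 0 := by rw [h1'] at ht; linarith
  have h5 : Kᵀ * Y * K = 0 := psd_eq_zero_of_trace h1 h4
  set B := psqrt Y with hBdef
  have hBps : B.PosSemidef := psqrt_posSemidef hY.posSemidef
  have hBt : Bᵀ = B := herm_transpose hBps.1
  have hBB : B * B = Y := psqrt_mul_self hY.posSemidef
  have h6 : (B * K)ᵀ * (B * K) = Kᵀ * Y * K := by
    rw [Matrix.transpose_mul, hBt, Matrix.mul_assoc, ← Matrix.mul_assoc B B K, hBB,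
      ← Matrix.mul_assoc]
  have h7 : B * K = 0 := by
    have h8 : (B * K)ᴴ * (B * K) = 0 := by
      rw [Matrix.conjTranspose_eq_transpose_of_trivial, h6, h5]
    exact Matrix.conjTranspose_mul_self_eq_zero.1 h8
  have hBd : B.det ≠ 0 := (psqrt_posDef hY).det_pos.ne'
  calc K = (B⁻¹ * B) * K := by rw [Matrix.nonsing_inv_mul B (Ne.isUnit hBd), Matrix.one_mul]
  _ = B⁻¹ * (B * K) := by rw [Matrix.mul_assoc]
  _ = 0 := by rw [h7, Matrix.mul_zero]

lemma frob_norm_sq {a b : ℕ} (M : Matrix (Fin a) (Fin b) ℝ) :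
    ‖M‖ ^ 2 = ∑ i, ∑ j, (M i j) ^ 2 := by
  have h0 : ∀ i j, ‖M i j‖ ^ (2:ℝ) = (M i j) ^ 2 := by
    intro i j
    rw [show (2:ℝ) = ((2:ℕ):ℝ) by norm_num, Real.rpow_natCast, Real.norm_eq_abs, sq_abs]
  rw [Matrix.frobenius_norm_def]
  simp_rw [h0]
  have ht : (0:ℝ) ≤ ∑ i, ∑ j, (M i j) ^ 2 := by positivity
  rw [← Real.rpow_natCast ((∑ i, ∑ j, (M i j) ^ 2) ^ (1/2:ℝ)) 2, ← Real.rpow_mul ht]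
  norm_num

lemma dot_sq_le {a : ℕ} (v w : Fin a → ℝ) :
    (v ⬝ᵥ w) ^ 2 ≤ (v ⬝ᵥ v) * (w ⬝ᵥ w) := by
  have := Finset.sum_mul_sq_le_sq_mul_sq Finset.univ v w
  simpa [dotProduct, pow_two] using this

lemma mulVec_dot_le {a b : ℕ} (M : Matrix (Fin a) (Fin b) ℝ) (v : Fin b → ℝ) :
    (M *ᵥ v) ⬝ᵥ (M *ᵥ v) ≤ ‖M‖ ^ 2 * (v ⬝ᵥ v) := by
  rw [frob_norm_sq]
  have hstep : ∀ i : Fin a, (M *ᵥ v) i ^ 2 ≤ (∑ j, (M i j) ^ 2) * (v ⬝ᵥ v) := by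
    intro i
    have := Finset.sum_mul_sq_le_sq_mul_sq Finset.univ (fun j => M i j) v
    simpa [Matrix.mulVec, dotProduct, pow_two] using this
  calc (M *ᵥ v) ⬝ᵥ (M *ᵥ v) = ∑ i, (M *ᵥ v) i ^ 2 := by
        simp [dotProduct, pow_two]
  _ ≤ ∑ i, (∑ j, (M i j) ^ 2) * (v ⬝ᵥ v) := Finset.sum_le_sum fun i _ => hstep i
  _ = (∑ i, ∑ j, (M i j) ^ 2) * (v ⬝ᵥ v) := by rw [Finset.sum_mul]

lemma dot_self_nonneg {a : ℕ} (v : Fin a → ℝ) : 0 ≤ v ⬝ᵥ v :=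
  Finset.sum_nonneg fun i _ => mul_self_nonneg _

lemma quad_abs_le {a : ℕ} (E : Matrix (Fin a) (Fin a) ℝ) (x : Fin a → ℝ) :
    |x ⬝ᵥ (E *ᵥ x)| ≤ ‖E‖ * (x ⬝ᵥ x) := by
  have h1 : (x ⬝ᵥ (E *ᵥ x)) ^ 2 ≤ (x ⬝ᵥ x) * ((E *ᵥ x) ⬝ᵥ (E *ᵥ x)) := dot_sq_le _ _
  have h2 := mulVec_dot_le E x
  have h3 : (0:ℝ) ≤ x ⬝ᵥ x := dot_self_nonneg x
  have h4 : (0:ℝ) ≤ ‖E‖ := norm_nonneg _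
  have h5 : (x ⬝ᵥ (E *ᵥ x)) ^ 2 ≤ (‖E‖ * (x ⬝ᵥ x)) ^ 2 := by nlinarith
  calc |x ⬝ᵥ (E *ᵥ x)| = Real.sqrt ((x ⬝ᵥ (E *ᵥ x)) ^ 2) := (Real.sqrt_sq_eq_abs _).symm
  _ ≤ Real.sqrt ((‖E‖ * (x ⬝ᵥ x)) ^ 2) := Real.sqrt_le_sqrt h5
  _ = ‖E‖ * (x ⬝ᵥ x) := Real.sqrt_sq (mul_nonneg h4 h3)

lemma posDef_of_close {n : ℕ} {Y₀ : Matrix (Fin n) (Fin n) ℝ} (h0 : Y₀.PosDef)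
    (hdet : (psqrt Y₀).det ≠ 0) :
    ∃ ε > 0, ∀ Y : Matrix (Fin n) (Fin n) ℝ, Y.IsHermitian → ‖Y - Y₀‖ < ε → Y.PosDef := by
  rcases Nat.eq_zero_or_pos n with hn | hn
  · subst hn
    exact ⟨1, one_pos, fun Y hY _ => ⟨hY, fun x hx => absurd (Subsingleton.elim x 0) hx⟩⟩
  set B := psqrt Y₀ with hBdef
  have hBps : B.PosSemidef := psqrt_posSemidef h0.posSemidef
  have hBt : Bᵀ = B := herm_transpose hBps.1
  have hBB : B * B = Y₀ := psqrt_mul_self h0.posSemidef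
  have hBinv : B⁻¹ * B = 1 := Matrix.nonsing_inv_mul B (Ne.isUnit hdet)
  have hBne : B⁻¹ ≠ 0 := by
    intro hB0
    have h1 : (1 : Matrix (Fin n) (Fin n) ℝ) = 0 := by rw [← hBinv, hB0, Matrix.zero_mul]
    have := congr_fun (congr_fun h1 ⟨0, hn⟩) ⟨0, hn⟩
    simp at this
  have hnormpos : 0 < ‖B⁻¹‖ := norm_pos_iff.2 hBne
  set c := (‖B⁻¹‖ ^ 2)⁻¹ with hcdef
  have hc : 0 < c := by positivity
  refine ⟨c, hc, fun Y hY hdist => ?_⟩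
  have lower : ∀ x : Fin n → ℝ, c * (x ⬝ᵥ x) ≤ x ⬝ᵥ (Y₀ *ᵥ x) := by
    intro x
    set u := B *ᵥ x with hu
    have h1 : x ⬝ᵥ (Y₀ *ᵥ x) = u ⬝ᵥ u := by
      rw [← hBB, ← Matrix.mulVec_mulVec, Matrix.dotProduct_mulVec]
      congr 1
      · rw [← hBt, Matrix.vecMul_transpose]
    have h2 : x ⬝ᵥ x ≤ ‖B⁻¹‖ ^ 2 * (u ⬝ᵥ u) := by
      have hx : B⁻¹ *ᵥ u = x := by
        rw [hu, Matrix.mulVec_mulVec, hBinv, Matrix.one_mulVec]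
      calc x ⬝ᵥ x = (B⁻¹ *ᵥ u) ⬝ᵥ (B⁻¹ *ᵥ u) := by rw [hx]
      _ ≤ ‖B⁻¹‖ ^ 2 * (u ⬝ᵥ u) := mulVec_dot_le _ _
    rw [h1]
    have h3 : 0 < ‖B⁻¹‖ ^ 2 := by positivity
    rw [hcdef]
    rw [inv_mul_le_iff₀ h3] at *
    nlinarith [dot_self_nonneg u]
  refine posDef_iff_dotProduct_mulVec.2 ⟨hY, fun x hx => ?_⟩
  have hxx : 0 < x ⬝ᵥ x := by
    rcases lt_or_eq_of_le (dot_self_nonneg x) with h | h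
    · exact h
    · exact absurd (dotProduct_self_eq_zero.1 h.symm) hx
  have hsplit : x ⬝ᵥ (Y *ᵥ x) = x ⬝ᵥ (Y₀ *ᵥ x) + x ⬝ᵥ ((Y - Y₀) *ᵥ x) := by
    rw [Matrix.sub_mulVec, dotProduct_sub]; ring
  have habs := quad_abs_le (Y - Y₀) x
  have hlow := lower x
  have hfin : 0 < x ⬝ᵥ (Y *ᵥ x) := by
    rw [hsplit]
    have h5 : ‖Y - Y₀‖ * (x ⬝ᵥ x) < c * (x ⬝ᵥ x) := by nlinarith
    have h6 := abs_le.1 habs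
    nlinarith
  show 0 < star x ⬝ᵥ (Y *ᵥ x)
  simpa using hfin

noncomputable def mulCLM (a b c : ℕ) : Matrix (Fin a) (Fin b) ℝ →L[ℝ]
    Matrix (Fin b) (Fin c) ℝ →L[ℝ] Matrix (Fin a) (Fin c) ℝ :=
  LinearMap.mkContinuous₂
    (LinearMap.mk₂ ℝ (· * ·) Matrix.add_mul (fun r M N => Matrix.smul_mul r M N)
      Matrix.mul_add (fun r M N => (Matrix.mul_smul M r N)))
    1 (fun M N => by simpa using Matrix.frobenius_norm_mul M N)

@[simp] lemma mulCLM_apply {a b c : ℕ} (M : Matrix (Fin a) (Fin b) ℝ)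
    (N : Matrix (Fin b) (Fin c) ℝ) : mulCLM a b c M N = M * N := rfl

noncomputable def transCLM (a b : ℕ) : Matrix (Fin a) (Fin b) ℝ →L[ℝ] Matrix (Fin b) (Fin a) ℝ :=
  LinearMap.mkContinuous (Matrix.transposeLinearEquiv (Fin a) (Fin b) ℝ ℝ).toLinearMap 1
    (fun M => by simp [Matrix.transposeLinearEquiv])

@[simp] lemma transCLM_apply {a b : ℕ} (M : Matrix (Fin a) (Fin b) ℝ) : transCLM a b M = Mᵀ := rfl

noncomputable def traceCLM (a : ℕ) : Matrix (Fin a) (Fin a) ℝ →L[ℝ] ℝ :=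
  LinearMap.toContinuousLinearMap (Matrix.traceLinearMap (Fin a) ℝ ℝ)

@[simp] lemma traceCLM_apply {a : ℕ} (M : Matrix (Fin a) (Fin a) ℝ) : traceCLM a M = M.trace := rfl

noncomputable def sylvCLM {n : ℕ} (Y : Matrix (Fin n) (Fin n) ℝ) :
    Matrix (Fin n) (Fin n) ℝ →L[ℝ] Matrix (Fin n) (Fin n) ℝ :=
  mulCLM n n n Y + (show Matrix (Fin n) (Fin n) ℝ →L[ℝ] Matrix (Fin n) (Fin n) ℝ from
    (mulCLM n n n).flip Y)

@[simp] lemma sylvCLM_apply {n : ℕ} (Y K : Matrix (Fin n) (Fin n) ℝ) :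
    sylvCLM Y K = Y * K + K * Y := rfl

section sq
variable {n : ℕ}
local notation "S" => Matrix (Fin n) (Fin n) ℝ

lemma hasStrictFDerivAt_sq (Y : S) :
    HasStrictFDerivAt (fun X : S => X * X) (sylvCLM Y) Y := by
  have h1 := (mulCLM n n n).isBoundedBilinearMap.hasStrictFDerivAt (Y, Y)
  have h2 : HasStrictFDerivAt (fun X : S => (X, X))
      ((ContinuousLinearMap.id ℝ S).prod (ContinuousLinearMap.id ℝ S)) Y :=
    HasStrictFDerivAt.prodMk (hasStrictFDerivAt_id Y) (hasStrictFDerivAt_id Y)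
  have h3 := HasStrictFDerivAt.comp (f := fun X : S => (X, X)) Y h1 h2
  have heq : (((mulCLM n n n).isBoundedBilinearMap.deriv (Y, Y)).comp
      ((ContinuousLinearMap.id ℝ S).prod (ContinuousLinearMap.id ℝ S))) = sylvCLM Y := by
    refine ContinuousLinearMap.ext fun K => ?_
    exact rfl
  exact h3.congr_fderiv heq

end sq

lemma trace_cyc1 {n p : ℕ} (A Yi : Matrix (Fin n) (Fin n) ℝ) (hAt : Aᵀ = A) (hYt : Yiᵀ = Yi)
    (ζ M : Matrix (Fin n) (Fin p) ℝ) :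
    (Yi * (A * (M * ζᵀ * A))).trace = ((A * Yi * A * ζ)ᵀ * M).trace := by
  have h1 : (A * Yi * A * ζ)ᵀ * M = (ζᵀ * A) * (Yi * (A * M)) := by
    simp only [Matrix.transpose_mul, hAt, hYt, Matrix.mul_assoc]
  have h2 : Yi * (A * (M * ζᵀ * A)) = (Yi * (A * M)) * (ζᵀ * A) := by
    simp only [Matrix.mul_assoc]
  rw [h1, h2, Matrix.trace_mul_comm]

lemma trace_cyc2 {n p : ℕ} (A Yi : Matrix (Fin n) (Fin n) ℝ) (hAt : Aᵀ = A) (hYt : Yiᵀ = Yi)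
    (ζ M : Matrix (Fin n) (Fin p) ℝ) :
    (Yi * (A * (ζ * Mᵀ * A))).trace = ((A * Yi * A * ζ)ᵀ * M).trace := by
  calc (Yi * (A * (ζ * Mᵀ * A))).trace
      = ((Yi * (A * (ζ * Mᵀ))) * A).trace := by simp only [Matrix.mul_assoc]
    _ = (A * (Yi * (A * (ζ * Mᵀ)))).trace := Matrix.trace_mul_comm _ _
    _ = ((A * (Yi * (A * ζ))) * Mᵀ).trace := by simp only [Matrix.mul_assoc]
    _ = (((A * (Yi * (A * ζ))) * Mᵀ)ᵀ).trace := (Matrix.trace_transpose _).symm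
    _ = (M * (A * (Yi * (A * ζ)))ᵀ).trace := by
          rw [Matrix.transpose_mul, Matrix.transpose_transpose]
    _ = ((A * (Yi * (A * ζ)))ᵀ * M).trace := Matrix.trace_mul_comm _ _
    _ = ((A * Yi * A * ζ)ᵀ * M).trace := by simp only [Matrix.mul_assoc]

end Helpers

/-- Gradient of `g(ζ) = tr((Σd^{1/2} ζ ζᵀ Σd^{1/2})^{1/2})` at a point with `ζζᵀ ≻ 0`:
there is a Fréchet derivative, and it is represented (w.r.t. the Frobenius inner product
`⟨A,B⟩ = tr(AᵀB)`) by `Σd^{1/2} (Σd^{1/2} ζ ζᵀ Σd^{1/2})^{-1/2} Σd^{1/2} ζ`. -/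
theorem gradient_trace_sqrt {n p : ℕ} (Sd : Matrix (Fin n) (Fin n) ℝ) (hSd : Sd.PosDef)
    (ζ : Matrix (Fin n) (Fin p) ℝ) (hζ : (ζ * ζᵀ).PosDef) :
    ∃ L : Matrix (Fin n) (Fin p) ℝ →L[ℝ] ℝ,
      HasFDerivAt (fun M : Matrix (Fin n) (Fin p) ℝ =>
          (psqrt (psqrt Sd * M * Mᵀ * psqrt Sd)).trace) L ζ
      ∧ ∀ M : Matrix (Fin n) (Fin p) ℝ,
          L M = (((psqrt Sd * (psqrt (psqrt Sd * ζ * ζᵀ * psqrt Sd))⁻¹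
                    * psqrt Sd * ζ))ᵀ * M).trace := by
  classical
  set A := psqrt Sd with hAdef
  have hApsd : A.PosSemidef := psqrt_posSemidef hSd.posSemidef
  have hApd : A.PosDef := psqrt_posDef hSd
  have hAt : Aᵀ = A := herm_transpose hApsd.1
  set X₀ := A * ζ * ζᵀ * A with hX₀def
  have hX₀eq2 : X₀ = A * (ζ * ζᵀ) * A := by rw [hX₀def]; simp only [Matrix.mul_assoc]
  have hX₀psd : X₀.PosSemidef := by
    rw [hX₀eq2]
    have h := hζ.posSemidef.mul_mul_conjTranspose_same A
    rwa [Matrix.conjTranspose_eq_transpose_of_trivial, hAt] at h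
  have hX₀det : X₀.det ≠ 0 := by
    rw [hX₀eq2, Matrix.det_mul, Matrix.det_mul]
    have h1 := hApd.det_pos
    have h2 := hζ.det_pos
    exact ne_of_gt (mul_pos (mul_pos h1 h2) h1)
  have hX₀pd : X₀.PosDef := posDef_of_det_ne_zero' hX₀psd hX₀det
  set Y₀ := psqrt X₀ with hY₀def
  have hY₀psd : Y₀.PosSemidef := psqrt_posSemidef hX₀psd
  have hY₀pd : Y₀.PosDef := psqrt_posDef hX₀pd
  have hY₀t : Y₀ᵀ = Y₀ := herm_transpose hY₀psd.1
  have hY₀sq : Y₀ * Y₀ = X₀ := psqrt_mul_self hX₀psd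
  have hY₀det : Y₀.det ≠ 0 := hY₀pd.det_pos.ne'
  -- the derivative of squaring at `Y₀` is invertible
  have hinj : Function.Injective (sylvCLM Y₀) := by
    intro K1 K2 hK
    have h0 : sylvCLM Y₀ (K1 - K2) = 0 := by rw [map_sub, hK, sub_self]
    have h1 : Y₀ * (K1 - K2) + (K1 - K2) * Y₀ = 0 := by rw [← sylvCLM_apply]; exact h0
    exact sub_eq_zero.1 (sylvester_inj hY₀pd h1)
  have hsurj : Function.Surjective (sylvCLM Y₀) :=
    (LinearMap.injective_iff_surjective
      (f := ((sylvCLM Y₀).toLinearMap : Matrix (Fin n) (Fin n) ℝ →ₗ[ℝ]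
        Matrix (Fin n) (Fin n) ℝ))).1 hinj
  let eL : Matrix (Fin n) (Fin n) ℝ ≃ₗ[ℝ] Matrix (Fin n) (Fin n) ℝ :=
    LinearEquiv.ofBijective (sylvCLM Y₀).toLinearMap ⟨hinj, hsurj⟩
  let e := eL.toContinuousLinearEquiv
  have hecoe : (e : Matrix (Fin n) (Fin n) ℝ →L[ℝ] Matrix (Fin n) (Fin n) ℝ) = sylvCLM Y₀ := by
    ext K
    rfl
  set f : Matrix (Fin n) (Fin n) ℝ → Matrix (Fin n) (Fin n) ℝ := fun X => X * X with hfdef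
  have hf' : HasStrictFDerivAt f (e : Matrix (Fin n) (Fin n) ℝ →L[ℝ]
      Matrix (Fin n) (Fin n) ℝ) Y₀ := by
    rw [hecoe]; exact hasStrictFDerivAt_sq Y₀
  set g := hf'.localInverse f e Y₀ with hgdef
  have hfY : f Y₀ = X₀ := hY₀sq
  -- Φ and its derivative
  set b2 := mulCLM n p n with hb2
  set Lpost := (mulCLM n n n A).comp ((mulCLM n n n).flip A) with hLpost
  set Φ : Matrix (Fin n) (Fin p) ℝ → Matrix (Fin n) (Fin n) ℝ :=
    fun M => Lpost (b2 M (Mᵀ)) with hΦdef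
  have hΦeq : ∀ M : Matrix (Fin n) (Fin p) ℝ, Φ M = A * ((M * Mᵀ) * A) := fun M => rfl
  set Ψ := Lpost.comp ((show Matrix (Fin n) (Fin p) ℝ →L[ℝ] Matrix (Fin n) (Fin n) ℝ from b2.flip ζᵀ)
    + (b2 ζ).comp (transCLM n p)) with hΨdef
  have hΦder : HasStrictFDerivAt Φ Ψ ζ := by
    have h1 := b2.isBoundedBilinearMap.hasStrictFDerivAt (ζ, ζᵀ)
    have h2 : HasStrictFDerivAt (fun M : Matrix (Fin n) (Fin p) ℝ => (M, Mᵀ))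
        ((ContinuousLinearMap.id ℝ (Matrix (Fin n) (Fin p) ℝ)).prod (transCLM n p)) ζ :=
      HasStrictFDerivAt.prodMk (hasStrictFDerivAt_id ζ) ((transCLM n p).hasStrictFDerivAt)
    have h3 := HasStrictFDerivAt.comp (f := fun M : Matrix (Fin n) (Fin p) ℝ => (M, Mᵀ)) ζ h1 h2
    have h4 := (Lpost.hasStrictFDerivAt (x := b2 ζ ζᵀ)).comp ζ h3
    have heq : Lpost.comp ((b2.isBoundedBilinearMap.deriv (ζ, ζᵀ)).comp
        ((ContinuousLinearMap.id ℝ (Matrix (Fin n) (Fin p) ℝ)).prod (transCLM n p))) = Ψ := by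
      refine ContinuousLinearMap.ext fun K => ?_
      show Lpost (ζ * Kᵀ + K * ζᵀ) = Lpost (K * ζᵀ + ζ * Kᵀ)
      rw [add_comm]
    exact h4.congr_fderiv heq
  have hΦζ : Φ ζ = X₀ := by rw [hΦeq, hX₀def]; simp only [Matrix.mul_assoc]
  have hg : HasStrictFDerivAt g ((e.symm : Matrix (Fin n) (Fin n) ℝ →L[ℝ]
      Matrix (Fin n) (Fin n) ℝ)) X₀ := by
    have h := hf'.to_localInverse
    rw [← hgdef] at h
    rwa [hfY] at h
  refine ⟨(traceCLM n).comp ((e.symm : Matrix (Fin n) (Fin n) ℝ →L[ℝ]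
      Matrix (Fin n) (Fin n) ℝ).comp Ψ), ?_, ?_⟩
  · -- differentiability
    have hgΦ : HasFDerivAt (fun M => g (Φ M)) ((e.symm : Matrix (Fin n) (Fin n) ℝ →L[ℝ]
        Matrix (Fin n) (Fin n) ℝ).comp Ψ) ζ := by
      have hg2 : HasFDerivAt g (e.symm : Matrix (Fin n) (Fin n) ℝ →L[ℝ]
          Matrix (Fin n) (Fin n) ℝ) (Φ ζ) := by
        rw [hΦζ]; exact hg.hasFDerivAt
      exact hg2.comp ζ hΦder.hasFDerivAt
    have hL : HasFDerivAt (fun M => (traceCLM n) (g (Φ M)))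
        ((traceCLM n).comp ((e.symm : Matrix (Fin n) (Fin n) ℝ →L[ℝ]
          Matrix (Fin n) (Fin n) ℝ).comp Ψ)) ζ :=
      ((traceCLM n).hasFDerivAt).comp ζ hgΦ
    have hgΦζ : g (Φ ζ) = Y₀ := by
      rw [hΦζ, ← hfY, hgdef]
      exact hf'.localInverse_apply_image
    have hΦcont : ContinuousAt Φ ζ := hΦder.continuousAt
    have hgcont : ContinuousAt g (Φ ζ) := by
      rw [hΦζ, ← hfY, hgdef]
      exact hf'.localInverse_continuousAt
    have hgΦcont : ContinuousAt (fun M => g (Φ M)) ζ := hgcont.comp hΦcont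
    obtain ⟨ε, hε, hopen⟩ := posDef_of_close hY₀pd (psqrt_posDef hY₀pd).det_pos.ne'
    have htend : Filter.Tendsto (fun M => g (Φ M)) (𝓝 ζ) (𝓝 Y₀) := by
      rw [← hgΦζ]; exact hgΦcont
    have E1 : ∀ᶠ M in 𝓝 ζ, f (g (Φ M)) = Φ M := by
      have h := hf'.eventually_right_inverse
      rw [← hgdef, hfY] at h
      have ht : Filter.Tendsto Φ (𝓝 ζ) (𝓝 X₀) := by rw [← hΦζ]; exact hΦcont
      exact ht.eventually h
    have E2 : ∀ᶠ M in 𝓝 ζ, g (f ((g (Φ M))ᵀ)) = (g (Φ M))ᵀ := by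
      have h := hf'.eventually_left_inverse
      rw [← hgdef] at h
      have ht : Filter.Tendsto (fun M => (g (Φ M))ᵀ) (𝓝 ζ) (𝓝 Y₀) := by
        have hc : ContinuousAt (fun M => (g (Φ M))ᵀ) ζ :=
          ((transCLM n n).continuous.continuousAt).comp hgΦcont
        have hval : (g (Φ ζ))ᵀ = Y₀ := by rw [hgΦζ, hY₀t]
        rw [← hval]
        exact hc
      exact ht.eventually h
    have E3 : ∀ᶠ M in 𝓝 ζ, ‖g (Φ M) - Y₀‖ < ε := by
      have h := Metric.tendsto_nhds.mp htend ε hε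
      filter_upwards [h] with M hM
      rwa [dist_eq_norm] at hM
    have hev : (fun M : Matrix (Fin n) (Fin p) ℝ => (psqrt (A * M * Mᵀ * A)).trace)
        =ᶠ[𝓝 ζ] (fun M => (traceCLM n) (g (Φ M))) := by
      filter_upwards [E1, E2, E3] with M h1 h2 h3
      have hW2 : (g (Φ M)) * (g (Φ M)) = Φ M := h1
      have hΦsym : (Φ M)ᵀ = Φ M := by
        rw [hΦeq]
        simp [Matrix.transpose_mul, hAt, Matrix.mul_assoc]
      have hWt : (g (Φ M))ᵀ = g (Φ M) := by
        have h4 : f ((g (Φ M))ᵀ) = Φ M := by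
          show (g (Φ M))ᵀ * (g (Φ M))ᵀ = Φ M
          rw [← Matrix.transpose_mul, hW2, hΦsym]
        rw [h4] at h2
        exact h2.symm
      have hWherm : (g (Φ M)).IsHermitian := by
        show (g (Φ M))ᴴ = g (Φ M)
        rw [Matrix.conjTranspose_eq_transpose_of_trivial]
        exact hWt
      have hWpd : (g (Φ M)).PosDef := hopen _ hWherm h3
      have hΦMpsd : (Φ M).PosSemidef := by
        rw [← hW2, ← pow_two]
        exact hWpd.posSemidef.pow 2
      have hkey : psqrt (Φ M) = g (Φ M) := by
        rw [psqrt_eq hΦMpsd]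
        exact (CFC.sqrt_eq_iff _ _ hΦMpsd.nonneg hWpd.posSemidef.nonneg).2 hW2
      have hAM : A * M * Mᵀ * A = Φ M := by rw [hΦeq]; simp only [Matrix.mul_assoc]
      rw [hAM, hkey]
      simp
    exact hL.congr_of_eventuallyEq hev
  · -- the formula
    intro M
    have hΨM : Ψ M = A * ((M * ζᵀ + ζ * Mᵀ) * A) := rfl
    have hLM : ((traceCLM n).comp ((e.symm : Matrix (Fin n) (Fin n) ℝ →L[ℝ]
        Matrix (Fin n) (Fin n) ℝ).comp Ψ)) M
        = ((e.symm : Matrix (Fin n) (Fin n) ℝ →L[ℝ] Matrix (Fin n) (Fin n) ℝ) (Ψ M)).trace := rfl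
    rw [hLM]
    set W := (e.symm : Matrix (Fin n) (Fin n) ℝ →L[ℝ] Matrix (Fin n) (Fin n) ℝ) (Ψ M)
      with hWdef
    have hDW : Y₀ * W + W * Y₀ = Ψ M := by
      have h1 : (e : Matrix (Fin n) (Fin n) ℝ →L[ℝ] Matrix (Fin n) (Fin n) ℝ) W = Ψ M := by
        rw [hWdef]
        simp
      rw [← h1, hecoe, sylvCLM_apply]
    have htr2 : W.trace + W.trace = (Y₀⁻¹ * Ψ M).trace := by
      rw [← hDW, Matrix.mul_add, Matrix.trace_add]
      congr 1
      · rw [← Matrix.mul_assoc, Matrix.nonsing_inv_mul Y₀ (Ne.isUnit hY₀det), Matrix.one_mul]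
      · rw [Matrix.trace_mul_comm, Matrix.mul_assoc,
          Matrix.mul_nonsing_inv Y₀ (Ne.isUnit hY₀det), Matrix.mul_one]
    have hYit : (Y₀⁻¹)ᵀ = Y₀⁻¹ := by rw [Matrix.transpose_nonsing_inv, hY₀t]
    have hformula : (Y₀⁻¹ * Ψ M).trace
        = ((A * Y₀⁻¹ * A * ζ)ᵀ * M).trace + ((A * Y₀⁻¹ * A * ζ)ᵀ * M).trace := by
      rw [hΨM]
      have hsplit : A * ((M * ζᵀ + ζ * Mᵀ) * A) = A * (M * ζᵀ * A) + A * (ζ * Mᵀ * A) := by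
        rw [Matrix.add_mul, Matrix.mul_add]
      rw [hsplit, Matrix.mul_add, Matrix.trace_add,
        trace_cyc1 A Y₀⁻¹ hAt hYit ζ M, trace_cyc2 A Y₀⁻¹ hAt hYit ζ M]
    linarith [htr2, hformula]
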